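/- Consider drawing b balls uniformly without replacement from an urn with a ≥ b balls of which some are red; let X be the number of red balls drawn. Then for all t ≥ 0, ℙ(|X - 𝔼[X]| > t) ≤ 2·exp(-2t²/b). -/

import Mathlib

open Real

lemma amgm_pow (u w : ℝ) (hu : 0 ≤ u) (hw : 0 ≤ w) (m : ℕ) :
    u ^ m * w ≤ (((m : ℝ) * u + w) / (m + 1)) ^ (m + 1) := by
  have hm1 : (0:ℝ) < (m:ℝ) + 1 := by positivity
  have key := Real.geom_mean_le_arith_mean2_weighted
    (by positivity : (0:ℝ) ≤ (m:ℝ)/(m+1)) (by positivity : (0:ℝ) ≤ 1/((m:ℝ)+1))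
    hu hw (by field_simp)
  have h1 : (m:ℝ)/((m:ℝ)+1) * ((m:ℝ)+1) = (m:ℝ) := by field_simp
  have h2 : 1/((m:ℝ)+1) * ((m:ℝ)+1) = 1 := by field_simp
  have hL : (u ^ ((m:ℝ)/((m:ℝ)+1)) * w ^ (1/((m:ℝ)+1))) ^ ((m:ℝ)+1) = u ^ m * w := by
    rw [Real.mul_rpow (by positivity) (by positivity), ← Real.rpow_mul hu,
      ← Real.rpow_mul hw, h1, h2, Real.rpow_one, Real.rpow_natCast]
  have hstep := Real.rpow_le_rpow (by positivity) key (le_of_lt hm1)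
  rw [hL] at hstep
  refine hstep.trans (le_of_eq ?_)
  rw [show (m:ℝ)/((m:ℝ)+1) * u + 1/((m:ℝ)+1) * w = ((m:ℝ)*u + w)/((m:ℝ)+1) by ring,
    show ((m:ℝ)+1) = ((m+1 : ℕ):ℝ) by push_cast; ring, Real.rpow_natCast]

-- Hoeffding's scalar lemma (s ≥ 0 version)
lemma hoeff_scalar (p : ℝ) (hp0 : 0 ≤ p) (hp1 : p ≤ 1) (s : ℝ) (hs : 0 ≤ s) :
    1 - p + p * Real.exp s ≤ Real.exp (s * p + s ^ 2 / 8) := by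
  set g : ℝ → ℝ := fun y => 1 - p + p * Real.exp y with hg
  have hgpos : ∀ y, 0 < g y := by
    intro y
    rcases eq_or_lt_of_le hp0 with h | h
    · simp [hg, ← h]
    · have := Real.exp_pos y
      simp only [hg]; nlinarith
  set h1 : ℝ → ℝ := fun y => p + y / 4 - p * Real.exp y / g y with hh1
  have hgd : ∀ y, HasDerivAt g (p * Real.exp y) y := by
    intro y
    simpa [hg] using ((Real.hasDerivAt_exp y).const_mul p).const_add (1 - p)
  have hh1d : ∀ y, HasDerivAt h1
      (1/4 - (p * Real.exp y * g y - p * Real.exp y * (p * Real.exp y)) / (g y)^2) y := by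
    intro y
    have hq : HasDerivAt (fun y => p * Real.exp y / g y)
        ((p * Real.exp y * g y - p * Real.exp y * (p * Real.exp y)) / (g y)^2) y :=
      ((Real.hasDerivAt_exp y).const_mul p).div (hgd y) (ne_of_gt (hgpos y))
    have : HasDerivAt (fun y => p + y / 4) (1/4) y := by
      simpa using ((hasDerivAt_id y).div_const 4).const_add p
    exact this.sub hq
  have hh1mono : Monotone h1 := by
    refine monotone_of_deriv_nonneg (fun y => (hh1d y).differentiableAt) ?_
    intro y
    rw [(hh1d y).deriv]
    have hgy := hgpos y
    have he := Real.exp_pos y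
    have h2 : (p * Real.exp y * g y - p * Real.exp y * (p * Real.exp y)) / (g y)^2 ≤ 1/4 := by
      rw [div_le_iff₀ (by positivity)]
      simp only [hg]
      nlinarith [sq_nonneg (1 - p - p * Real.exp y), he]
    linarith
  have hh10 : h1 0 = 0 := by
    simp [hh1, hg]
  have hh1nonneg : ∀ y, 0 ≤ y → 0 ≤ h1 y := by
    intro y hy
    have := hh1mono hy
    rw [hh10] at this; exact this
  set h : ℝ → ℝ := fun y => y * p + y ^ 2 / 8 - Real.log (g y) with hh
  have hhd : ∀ y, HasDerivAt h (h1 y) y := by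
    intro y
    have hlog : HasDerivAt (fun y => Real.log (g y)) (p * Real.exp y / g y) y :=
      (hgd y).log (ne_of_gt (hgpos y))
    have h2 : HasDerivAt (fun y : ℝ => y * p + y ^ 2 / 8) (p + y / 4) y := by
      have := ((hasDerivAt_id y).mul_const p).add (((hasDerivAt_pow 2 y)).div_const 8)
      exact this.congr_deriv (by norm_num <;> ring)
    exact h2.sub hlog
  have hmono : MonotoneOn h (Set.Ici 0) := by
    refine monotoneOn_of_deriv_nonneg (convex_Ici 0)
      (fun y _ => ((hhd y).differentiableAt.continuousAt).continuousWithinAt)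
      (fun y _ => ((hhd y).differentiableAt).differentiableWithinAt) ?_
    intro y hy
    rw [(hhd y).deriv]
    exact hh1nonneg y (le_of_lt (by simpa using hy))
  have h0 : h 0 = 0 := by simp [hh, hg]
  have := hmono (Set.self_mem_Ici) (by exact hs : s ∈ Set.Ici 0) hs
  rw [h0] at this
  have hlog : Real.log (g s) ≤ s * p + s ^ 2 / 8 := by
    simp only [hh] at this; linarith
  calc g s = Real.exp (Real.log (g s)) := (Real.exp_log (hgpos s)).symm
    _ ≤ Real.exp (s * p + s ^ 2 / 8) := Real.exp_le_exp.mpr hlog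






-- key polynomial inequality: MGF of hypergeometric counts dominated by binomial form
lemma lemA : ∀ N K n : ℕ, K ≤ N → ∀ x : ℝ, 0 ≤ x →
    ∑ k ∈ Finset.range (n+1), (Nat.choose K k : ℝ) * (Nat.choose (N-K) (n-k) : ℝ) * x ^ k
      ≤ (Nat.choose N n : ℝ) * (((N:ℝ) - K + K * x) / N) ^ n := by
  intro N
  induction N with
  | zero =>
    intro K n hK x hx
    interval_cases K
    cases n with
    | zero => simp
    | succ m =>
      rw [Finset.sum_eq_zero]
      · simp [Nat.choose_eq_zero_of_lt (Nat.succ_pos m)]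
      · intro k hk
        rcases Nat.eq_zero_or_pos k with h | h
        · subst h; simp [Nat.choose_eq_zero_of_lt (Nat.succ_pos m)]
        · simp [Nat.choose_eq_zero_of_lt h]
  | succ N ih =>
    intro K n hK x hx
    -- trivial if n > N+1
    rcases le_or_gt n (N+1) with hn | hn
    swap
    · rw [Finset.sum_eq_zero]
      · have hKr : (K:ℝ) ≤ (N:ℝ)+1 := by exact_mod_cast hK
        have h1 : (0:ℝ) ≤ ((N:ℝ)+1) - (K:ℝ) + (K:ℝ) * x := by nlinarith
        push_cast
        exact mul_nonneg (Nat.cast_nonneg _)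
          (pow_nonneg (div_nonneg h1 (by positivity)) n)
      · intro k hk
        rcases le_or_gt k K with h1 | h1
        · have h2 : N + 1 - K < n - k := by omega
          simp [Nat.choose_eq_zero_of_lt h2]
        · simp [Nat.choose_eq_zero_of_lt h1]
    rcases Nat.eq_zero_or_pos n with h | hnpos
    · subst h; simp
    rcases Nat.eq_zero_or_pos K with h | hKpos
    · subst h
      rw [Finset.sum_eq_single 0]
      · have h1 : ((N:ℝ)+1)/((N:ℝ)+1) = 1 := div_self (by positivity)
        push_cast
        rw [show (N:ℝ) + 1 - 0 + 0 * x = (N:ℝ) + 1 by ring, h1, one_pow, mul_one]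
        simp
      · intro k hk hk0
        simp [Nat.choose_eq_zero_of_lt (Nat.pos_of_ne_zero hk0)]
      · intro h; simp at h
    obtain ⟨m, rfl⟩ : ∃ m, n = m + 1 := ⟨n - 1, by omega⟩
    obtain ⟨K', rfl⟩ : ∃ K', K = K' + 1 := ⟨K - 1, by omega⟩
    have hK'N : K' ≤ N := by omega
    have hmN : m ≤ N := by omega
    -- the recursion step
    have hsub : N + 1 - (K' + 1) = N - K' := by omega
    have split : ∑ k ∈ Finset.range (m+2),
          (Nat.choose (K'+1) k : ℝ) * (Nat.choose (N+1-(K'+1)) (m+1-k) : ℝ) * x ^ k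
        = x * (∑ k ∈ Finset.range (m+1),
            (Nat.choose K' k : ℝ) * (Nat.choose (N-K') (m-k) : ℝ) * x ^ k)
          + ∑ k ∈ Finset.range (m+2),
            (Nat.choose K' k : ℝ) * (Nat.choose (N-K') (m+1-k) : ℝ) * x ^ k := by
      rw [hsub, Finset.sum_range_succ' _ (m+1), Finset.sum_range_succ' (fun k =>
          (Nat.choose K' k : ℝ) * (Nat.choose (N-K') (m+1-k) : ℝ) * x ^ k) (m+1),
        Finset.mul_sum]
      have e1 : ∀ k ∈ Finset.range (m+1),
          (Nat.choose (K'+1) (k+1) : ℝ) * (Nat.choose (N-K') (m+1-(k+1)) : ℝ) * x ^ (k+1)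
          = x * ((Nat.choose K' k : ℝ) * (Nat.choose (N-K') (m-k) : ℝ) * x ^ k)
            + (Nat.choose K' (k+1) : ℝ) * (Nat.choose (N-K') (m+1-(k+1)) : ℝ) * x ^ (k+1) := by
        intro k hk
        have : Nat.choose (K'+1) (k+1) = Nat.choose K' k + Nat.choose K' (k+1) :=
          Nat.choose_succ_succ' K' k
        rw [this]
        have : m + 1 - (k+1) = m - k := by omega
        rw [this]
        push_cast
        ring
      rw [Finset.sum_congr rfl e1, Finset.sum_add_distrib]
      simp
      ring
    rw [show m + 1 + 1 = m + 2 by rfl] at *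
    push_cast
    rw [hsub] at split
    rw [split]
    have ih1 := ih K' m hK'N x hx
    have ih2 := ih K' (m+1) hK'N x hx
    set u : ℝ := ((N:ℝ) - K' + K' * x) / N with hu
    have hu0 : 0 ≤ u := by
      have : (K':ℝ) ≤ (N:ℝ) := by exact_mod_cast hK'N
      have : (0:ℝ) ≤ (N:ℝ) - K' + K' * x := by nlinarith
      positivity
    set v : ℝ := (((N:ℝ)+1) - (K'+1) + ((K':ℝ)+1) * x) / ((N:ℝ)+1) with hv
    have hN1 : (0:ℝ) < (N:ℝ) + 1 := by positivity
    -- combine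
    have comb : x * ((Nat.choose N m : ℝ) * u ^ m) + (Nat.choose N (m+1) : ℝ) * u ^ (m+1)
        ≤ (Nat.choose (N+1) (m+1) : ℝ) * v ^ (m+1) := by
      have c1 : ((N:ℝ)+1) * (Nat.choose N m : ℝ) = (Nat.choose (N+1) (m+1) : ℝ) * ((m:ℝ)+1) := by
        exact_mod_cast congrArg (Nat.cast (R := ℝ)) (Nat.add_one_mul_choose_eq N m)
      have c2 : ((N:ℝ)+1) * (Nat.choose N (m+1) : ℝ)
          = (Nat.choose (N+1) (m+1) : ℝ) * ((N:ℝ) - m) := by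
        have h := Nat.choose_mul_succ_eq N (m+1)
        have h' : Nat.choose N (m+1) * (N + 1) = Nat.choose (N+1) (m+1) * (N - m) := by
          simpa using h
        have := congrArg (Nat.cast (R := ℝ)) h'
        push_cast [Nat.cast_sub hmN] at this
        linarith
      rcases Nat.eq_zero_or_pos N with hN0 | hNpos
      · subst hN0
        have hK'0 : K' = 0 := by omega
        have hm0 : m = 0 := by omega
        subst hK'0; subst hm0
        simp [hv]
      · have hNr : (0:ℝ) < (N:ℝ) := by exact_mod_cast hNpos
        have hc : (0:ℝ) < (Nat.choose (N+1) (m+1) : ℝ) := by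
          exact_mod_cast Nat.choose_pos (by omega : m + 1 ≤ N + 1)
        have hmr : (m:ℝ) ≤ (N:ℝ) := by exact_mod_cast hmN
        have hw0 : 0 ≤ (x*((m:ℝ)+1) + ((N:ℝ)-(m:ℝ))*u)/((N:ℝ)+1) := by
          have h1 : 0 ≤ ((N:ℝ)-(m:ℝ))*u := mul_nonneg (by linarith) hu0
          have h2 : 0 ≤ x*((m:ℝ)+1) := by positivity
          exact div_nonneg (by linarith) (by linarith)
        have key := amgm_pow u _ hu0 hw0 m
        have hveq : ((m:ℝ)*u + (x*((m:ℝ)+1)+((N:ℝ)-(m:ℝ))*u)/((N:ℝ)+1))/((m:ℝ)+1) = v := by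
          rw [hv, hu]
          field_simp
          ring
        rw [hveq] at key
        have c1' : (Nat.choose N m : ℝ)
            = (Nat.choose (N+1) (m+1):ℝ)*((m:ℝ)+1)/((N:ℝ)+1) := by
          field_simp
          linarith [c1]
        have c2' : (Nat.choose N (m+1) : ℝ)
            = (Nat.choose (N+1) (m+1):ℝ)*((N:ℝ)-(m:ℝ))/((N:ℝ)+1) := by
          field_simp
          linarith [c2]
        have e : x * ((Nat.choose N m:ℝ) * u^m) + (Nat.choose N (m+1):ℝ)*u^(m+1)
            = (Nat.choose (N+1) (m+1):ℝ)
              * (u^m * ((x*((m:ℝ)+1)+((N:ℝ)-(m:ℝ))*u)/((N:ℝ)+1))) := by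
          rw [c1', c2', pow_succ]
          field_simp
        rw [e]
        exact mul_le_mul_of_nonneg_left key (le_of_lt hc)
    calc x * (∑ k ∈ Finset.range (m+1),
            (Nat.choose K' k : ℝ) * (Nat.choose (N-K') (m-k) : ℝ) * x ^ k)
          + ∑ k ∈ Finset.range (m+2),
            (Nat.choose K' k : ℝ) * (Nat.choose (N-K') (m+1-k) : ℝ) * x ^ k
        ≤ x * ((Nat.choose N m : ℝ) * u ^ m) + (Nat.choose N (m+1) : ℝ) * u ^ (m+1) := by
          have := mul_le_mul_of_nonneg_left ih1 hx
          linarith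
      _ ≤ (Nat.choose (N+1) (m+1) : ℝ) * v ^ (m+1) := comb








lemma countB (a b : ℕ) (R : Finset (Fin a)) (k : ℕ) (hk : k ≤ b) :
    ((Finset.powersetCard b (Finset.univ : Finset (Fin a))).filter
        (fun A => (A ∩ R).card = k)).card
      = Nat.choose R.card k * Nat.choose (a - R.card) (b - k) := by
  have := Finset.card_nbij' (s := (Finset.powersetCard b (Finset.univ : Finset (Fin a))).filter
        (fun A => (A ∩ R).card = k))
    (t := (R.powersetCard k) ×ˢ (Rᶜ.powersetCard (b - k)))
    (fun A => (A ∩ R, A \ R)) (fun P => P.1 ∪ P.2)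
    (by
      intro A hA
      simp only [Finset.mem_coe, Finset.mem_filter, Finset.mem_powersetCard] at hA
      obtain ⟨⟨_, hcard⟩, hint⟩ := hA
      simp only [Finset.mem_coe, Finset.mem_product, Finset.mem_powersetCard]
      refine ⟨⟨Finset.inter_subset_right, hint⟩, ⟨?_, ?_⟩⟩
      · intro x hx
        simp only [Finset.mem_sdiff] at hx
        simp [Finset.mem_compl, hx.2]
      · have h := Finset.card_sdiff_add_card_inter A R
        omega)
    (by
      intro P hP
      simp only [Finset.mem_coe, Finset.mem_product, Finset.mem_powersetCard] at hP
      obtain ⟨⟨hBR, hBc⟩, hCR, hCc⟩ := hP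
      have hdisj : Disjoint P.1 P.2 := by
        refine Finset.disjoint_left.mpr ?_
        intro x hx1 hx2
        exact (Finset.mem_compl.mp (hCR hx2)) (hBR hx1)
      simp only [Finset.mem_coe, Finset.mem_filter, Finset.mem_powersetCard]
      refine ⟨⟨Finset.subset_univ _, ?_⟩, ?_⟩
      · rw [Finset.card_union_of_disjoint hdisj, hBc, hCc]; omega
      · have h1 : P.1 ∩ R = P.1 := Finset.inter_eq_left.mpr hBR
        have h2 : P.2 ∩ R = ∅ := by
          refine Finset.eq_empty_of_forall_notMem ?_
          intro x hx
          simp only [Finset.mem_inter] at hx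
          exact (Finset.mem_compl.mp (hCR hx.1)) hx.2
        rw [Finset.union_inter_distrib_right, h1, h2, Finset.union_empty, hBc])
    (by
      intro A hA
      show (A ∩ R) ∪ (A \ R) = A
      ext x
      simp only [Finset.mem_union, Finset.mem_inter, Finset.mem_sdiff]
      tauto)
    (by
      intro P hP
      simp only [Finset.mem_coe, Finset.mem_product, Finset.mem_powersetCard] at hP
      obtain ⟨⟨hBR, hBc⟩, hCR, hCc⟩ := hP
      have h1 : P.1 ∩ R = P.1 := Finset.inter_eq_left.mpr hBR
      have h2 : P.2 ∩ R = ∅ := by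
        refine Finset.eq_empty_of_forall_notMem ?_
        intro x hx
        simp only [Finset.mem_inter] at hx
        exact (Finset.mem_compl.mp (hCR hx.1)) hx.2
      have h3 : P.1 \ R = ∅ := by
        refine Finset.eq_empty_of_forall_notMem ?_
        intro x hx
        simp only [Finset.mem_sdiff] at hx
        exact hx.2 (hBR hx.1)
      have h4 : P.2 \ R = P.2 := by
        refine Finset.sdiff_eq_self_of_disjoint ?_
        refine Finset.disjoint_left.mpr ?_
        intro x hx1 hx2
        exact (Finset.mem_compl.mp (hCR hx1)) hx2
      ext <;> simp [Finset.union_sdiff_distrib, Finset.union_inter_distrib_right,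
        h1, h2, h3, h4])
  rw [this, Finset.card_product, Finset.card_powersetCard, Finset.card_powersetCard,
    Finset.card_compl, Fintype.card_fin]

lemma sumB (a b : ℕ) (R : Finset (Fin a)) (f : ℕ → ℝ) :
    ∑ A ∈ Finset.powersetCard b (Finset.univ : Finset (Fin a)), f ((A ∩ R).card)
      = ∑ k ∈ Finset.range (b+1),
          (Nat.choose R.card k : ℝ) * (Nat.choose (a - R.card) (b - k) : ℝ) * f k := by
  rw [← Finset.sum_fiberwise_of_maps_to (g := fun A => (A ∩ R).card)
      (t := Finset.range (b+1)) ?_ (fun A => f ((A ∩ R).card))]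
  · refine Finset.sum_congr rfl ?_
    intro k hk
    have hk' : k ≤ b := by simpa using Nat.lt_succ_iff.mp (Finset.mem_range.mp hk)
    rw [Finset.sum_congr rfl (fun A hA => by
        rw [(Finset.mem_filter.mp hA).2]), Finset.sum_const, countB a b R k hk']
    push_cast
    ring
  · intro A hA
    simp only [Finset.mem_powersetCard] at hA
    have : (A ∩ R).card ≤ b := le_trans (Finset.card_le_card Finset.inter_subset_left) hA.2.le
    simp [Nat.lt_succ_iff, this]










lemma tail (a b : ℕ) (hb0 : 0 < b) (hba : b ≤ a) (R : Finset (Fin a)) (t : ℝ) (ht : 0 ≤ t) :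
    (((Finset.powersetCard b (Finset.univ : Finset (Fin a))).filter (fun A =>
        ((A ∩ R).card : ℝ) - (b:ℝ) * (R.card : ℝ) / (a:ℝ) > t)).card : ℝ)
      ≤ (Nat.choose a b : ℝ) * Real.exp (-2 * t^2 / b) := by
  have ha0 : 0 < a := lt_of_lt_of_le hb0 hba
  have har : (0:ℝ) < (a:ℝ) := by exact_mod_cast ha0
  have hbr : (0:ℝ) < (b:ℝ) := by exact_mod_cast hb0
  have hKa : R.card ≤ a := le_trans (Finset.card_le_univ R) (by simp)
  have hKar : (R.card : ℝ) ≤ (a:ℝ) := by exact_mod_cast hKa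
  set K := R.card with hK
  set p : ℝ := (K:ℝ)/(a:ℝ) with hp
  set μ : ℝ := (b:ℝ) * (K:ℝ) / (a:ℝ) with hμ
  set s : ℝ := 4 * t / b with hsdef
  have hs : 0 ≤ s := by positivity
  set Ω := Finset.powersetCard b (Finset.univ : Finset (Fin a)) with hΩ
  have step1 : ((Ω.filter (fun A => ((A ∩ R).card : ℝ) - μ > t)).card : ℝ) * Real.exp (s*t)
      ≤ ∑ A ∈ Ω, Real.exp (s * (((A ∩ R).card : ℝ) - μ)) := by
    calc ((Ω.filter (fun A => ((A ∩ R).card : ℝ) - μ > t)).card : ℝ) * Real.exp (s*t)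
        = ∑ _A ∈ Ω.filter (fun A => ((A ∩ R).card : ℝ) - μ > t), Real.exp (s*t) := by
          rw [Finset.sum_const, nsmul_eq_mul]
      _ ≤ ∑ A ∈ Ω.filter (fun A => ((A ∩ R).card : ℝ) - μ > t),
            Real.exp (s * (((A ∩ R).card : ℝ) - μ)) := by
          refine Finset.sum_le_sum (fun A hA => ?_)
          have h := (Finset.mem_filter.mp hA).2
          exact Real.exp_le_exp.mpr (mul_le_mul_of_nonneg_left (le_of_lt h) hs)
      _ ≤ ∑ A ∈ Ω, Real.exp (s * (((A ∩ R).card : ℝ) - μ)) :=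
          Finset.sum_le_sum_of_subset_of_nonneg (Finset.filter_subset _ _)
            (fun A _ _ => (Real.exp_pos _).le)
  have step2 : ∑ A ∈ Ω, Real.exp (s * (((A ∩ R).card : ℝ) - μ))
      = Real.exp (-(s*μ)) * ∑ A ∈ Ω, (Real.exp s) ^ ((A ∩ R).card) := by
    rw [Finset.mul_sum]
    refine Finset.sum_congr rfl (fun A _ => ?_)
    rw [← Real.exp_nat_mul, ← Real.exp_add]
    ring_nf
  have step3 : ∑ A ∈ Ω, (Real.exp s) ^ ((A ∩ R).card)
      ≤ (Nat.choose a b : ℝ) * (((a:ℝ) - K + K * Real.exp s)/a) ^ b := by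
    rw [hΩ, sumB a b R (fun k => (Real.exp s)^k)]
    exact lemA a K b hKa _ (Real.exp_pos s).le
  have hp0 : 0 ≤ p := by positivity
  have hp1 : p ≤ 1 := by rw [hp, div_le_one har]; exact hKar
  have hbase : ((a:ℝ) - K + K * Real.exp s)/a = 1 - p + p * Real.exp s := by
    rw [hp]; field_simp
  have hbase0 : (0:ℝ) ≤ 1 - p + p * Real.exp s := by
    nlinarith [Real.exp_pos s, mul_nonneg hp0 (Real.exp_pos s).le]
  have step4 : (((a:ℝ) - K + K * Real.exp s)/a) ^ b
      ≤ Real.exp ((b:ℝ) * (s*p + s^2/8)) := by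
    rw [hbase, Real.exp_nat_mul]
    exact pow_le_pow_left₀ hbase0 (hoeff_scalar p hp0 hp1 s hs) b
  have chain : ((Ω.filter (fun A => ((A ∩ R).card : ℝ) - μ > t)).card : ℝ) * Real.exp (s*t)
      ≤ (Nat.choose a b : ℝ) * (Real.exp (-(s*μ)) * Real.exp ((b:ℝ) * (s*p + s^2/8))) := by
    have h1 := step1.trans (le_of_eq step2)
    have h2 : Real.exp (-(s*μ)) * (∑ A ∈ Ω, (Real.exp s) ^ ((A ∩ R).card))
        ≤ Real.exp (-(s*μ)) * ((Nat.choose a b : ℝ) * (((a:ℝ) - K + K * Real.exp s)/a) ^ b) :=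
      mul_le_mul_of_nonneg_left step3 (Real.exp_pos _).le
    have h3 : Real.exp (-(s*μ)) * ((Nat.choose a b : ℝ) * (((a:ℝ) - K + K * Real.exp s)/a) ^ b)
        ≤ Real.exp (-(s*μ)) * ((Nat.choose a b : ℝ) * Real.exp ((b:ℝ) * (s*p + s^2/8))) := by
      refine mul_le_mul_of_nonneg_left ?_ (Real.exp_pos _).le
      exact mul_le_mul_of_nonneg_left step4 (Nat.cast_nonneg _)
    calc ((Ω.filter (fun A => ((A ∩ R).card : ℝ) - μ > t)).card : ℝ) * Real.exp (s*t)
        ≤ Real.exp (-(s*μ)) * ((Nat.choose a b : ℝ) * Real.exp ((b:ℝ) * (s*p + s^2/8))) :=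
          h1.trans (h2.trans h3)
      _ = (Nat.choose a b : ℝ) * (Real.exp (-(s*μ)) * Real.exp ((b:ℝ) * (s*p + s^2/8))) := by
          ring
  rw [← le_div_iff₀ (Real.exp_pos (s*t))] at chain
  refine chain.trans (le_of_eq ?_)
  rw [← Real.exp_add, mul_div_assoc, div_eq_mul_inv, ← Real.exp_neg, ← Real.exp_add]
  congr 1
  rw [hμ, hp, hsdef]
  congr 1
  field_simp
  ring

theorem stmt_10 (a b : ℕ) (hb0 : 0 < b) (hba : b ≤ a) (Red : Finset (Fin a))
    (t : ℝ) (ht : 0 ≤ t) :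
    let Ω := Finset.powersetCard b (Finset.univ : Finset (Fin a))
    ((Ω.filter (fun A =>
        |((A ∩ Red).card : ℝ) - (b : ℝ) * (Red.card : ℝ) / (a : ℝ)| > t)).card : ℝ)
      / (Ω.card : ℝ) ≤ 2 * Real.exp (-2 * t ^ 2 / b) := by
  intro Ω
  have ha0 : 0 < a := lt_of_lt_of_le hb0 hba
  have har : (0:ℝ) < (a:ℝ) := by exact_mod_cast ha0
  have hbr : (0:ℝ) < (b:ℝ) := by exact_mod_cast hb0
  have hKa : Red.card ≤ a := le_trans (Finset.card_le_univ Red) (by simp)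
  have hΩcard : (Ω.card : ℝ) = (Nat.choose a b : ℝ) := by
    simp [Ω, Finset.card_powersetCard]
  have hΩpos : (0:ℝ) < (Ω.card : ℝ) := by
    rw [hΩcard]; exact_mod_cast Nat.choose_pos hba
  rw [div_le_iff₀ hΩpos]
  have hΩdef : Ω = Finset.powersetCard b (Finset.univ : Finset (Fin a)) := rfl
  have hsub : Ω.filter (fun A =>
        |((A ∩ Red).card : ℝ) - (b : ℝ) * (Red.card : ℝ) / (a : ℝ)| > t)
      ⊆ (Ω.filter (fun A =>
          ((A ∩ Red).card : ℝ) - (b:ℝ) * (Red.card : ℝ) / (a:ℝ) > t))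
        ∪ (Ω.filter (fun A =>
          ((A ∩ Redᶜ).card : ℝ) - (b:ℝ) * (((Redᶜ : Finset (Fin a))).card : ℝ) / (a:ℝ) > t)) := by
    intro A hA
    obtain ⟨hAΩ, habs⟩ := Finset.mem_filter.mp hA
    rw [Finset.mem_union, Finset.mem_filter, Finset.mem_filter]
    rcases abs_cases (((A ∩ Red).card : ℝ) - (b:ℝ) * (Red.card : ℝ) / (a:ℝ)) with
      ⟨he, _⟩ | ⟨he, _⟩
    · left
      exact ⟨hAΩ, by rw [he] at habs; exact habs⟩
    · right
      refine ⟨hAΩ, ?_⟩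
      rw [he] at habs
      have hAcard : A.card = b := (Finset.mem_powersetCard.mp (hΩdef ▸ hAΩ)).2
      have hcompl : A ∩ Redᶜ = A \ Red := by
        ext x
        simp [Finset.mem_sdiff, Finset.mem_compl, Finset.mem_inter]
      have hXc : (A ∩ Redᶜ).card + (A ∩ Red).card = b := by
        rw [hcompl, Finset.card_sdiff_add_card_inter, hAcard]
      have hXcr : ((A ∩ Redᶜ).card : ℝ) = (b:ℝ) - ((A ∩ Red).card : ℝ) := by
        have := congrArg (Nat.cast (R := ℝ)) hXc
        push_cast at this
        linarith
      have hRc : (((Redᶜ : Finset (Fin a))).card : ℝ) = (a:ℝ) - (Red.card : ℝ) := by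
        rw [Finset.card_compl, Fintype.card_fin, Nat.cast_sub hKa]
      rw [hXcr, hRc]
      have key : (b:ℝ) - ((A ∩ Red).card : ℝ) - (b:ℝ) * ((a:ℝ) - (Red.card:ℝ)) / (a:ℝ)
          = -(((A ∩ Red).card : ℝ) - (b:ℝ) * (Red.card : ℝ) / (a:ℝ)) := by
        field_simp
        ring
      rw [key]
      exact habs
  have t1 := tail a b hb0 hba Red t ht
  have t2 := tail a b hb0 hba Redᶜ t ht
  rw [← hΩdef] at t1 t2
  have hcards : ((Ω.filter (fun A =>
        |((A ∩ Red).card : ℝ) - (b : ℝ) * (Red.card : ℝ) / (a : ℝ)| > t)).card : ℝ)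
      ≤ ((Ω.filter (fun A =>
          ((A ∩ Red).card : ℝ) - (b:ℝ) * (Red.card : ℝ) / (a:ℝ) > t)).card : ℝ)
        + ((Ω.filter (fun A =>
          ((A ∩ Redᶜ).card : ℝ) - (b:ℝ) * (((Redᶜ : Finset (Fin a))).card : ℝ) / (a:ℝ)
            > t)).card : ℝ) := by
    have h1 := Finset.card_le_card hsub
    have h2 := Finset.card_union_le (Ω.filter (fun A =>
          ((A ∩ Red).card : ℝ) - (b:ℝ) * (Red.card : ℝ) / (a:ℝ) > t))
      (Ω.filter (fun A =>
          ((A ∩ Redᶜ).card : ℝ) - (b:ℝ) * (((Redᶜ : Finset (Fin a))).card : ℝ) / (a:ℝ) > t))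
    exact_mod_cast le_trans h1 h2
  calc ((Ω.filter (fun A =>
        |((A ∩ Red).card : ℝ) - (b : ℝ) * (Red.card : ℝ) / (a : ℝ)| > t)).card : ℝ)
      ≤ ((Ω.filter (fun A =>
          ((A ∩ Red).card : ℝ) - (b:ℝ) * (Red.card : ℝ) / (a:ℝ) > t)).card : ℝ)
        + ((Ω.filter (fun A =>
          ((A ∩ Redᶜ).card : ℝ) - (b:ℝ) * (((Redᶜ : Finset (Fin a))).card : ℝ) / (a:ℝ)
            > t)).card : ℝ) := hcards
    _ ≤ (Nat.choose a b : ℝ) * Real.exp (-2 * t^2 / b)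
        + (Nat.choose a b : ℝ) * Real.exp (-2 * t^2 / b) := add_le_add t1 t2
    _ = 2 * Real.exp (-2 * t ^ 2 / b) * (Ω.card : ℝ) := by
        rw [hΩcard]; ring
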